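/- Let A and S be n×n complex matrices, Cu and S_c p×n complex matrices, δ, δ_c ∈ ℝ, and s ∈ ℂ with Φ := sI − A invertible. Then the p×3n block matrix T := [Cu·Φ⁻¹ , Cu·Φ⁻¹·δS + δ_c·S_c] (horizontal block concatenation) satisfies ‖T‖ ≤ ‖Cu·Φ⁻¹‖ + ‖[Cu·Φ⁻¹·S , S_c]‖ · √(δ² + δ_c²), where ‖·‖ is the L2 operator norm. -/

import Mathlib

open scoped Matrix.Norms.L2Operator

open Matrix in
lemma l2_norm_one_le {n : ℕ} : ‖(1 : Matrix (Fin n) (Fin n) ℂ)‖ ≤ 1 := by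
  have h := Matrix.l2_opNorm_conjTranspose_mul_self (1 : Matrix (Fin n) (Fin n) ℂ)
  simp only [Matrix.conjTranspose_one, one_mul] at h
  nlinarith [norm_nonneg (1 : Matrix (Fin n) (Fin n) ℂ)]

open Matrix in
lemma l2_norm_fromColumns_le {n n' p : ℕ} (X : Matrix (Fin p) (Fin n) ℂ)
    (Y : Matrix (Fin p) (Fin n') ℂ) :
    ‖Matrix.fromCols X Y‖ ≤ ‖X‖ + ‖Y‖ := by
  have hsplit : Matrix.fromCols X Y
      = X * Matrix.fromCols (1 : Matrix (Fin n) (Fin n) ℂ) 0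
        + Y * Matrix.fromCols (0 : Matrix (Fin n') (Fin n) ℂ) 1 := by
    rw [Matrix.mul_fromCols, Matrix.mul_fromCols, Matrix.mul_one, Matrix.mul_zero,
      Matrix.mul_zero, Matrix.mul_one]
    ext i (j|j) <;> simp [Matrix.fromCols]
  have hXi : ‖Matrix.fromCols (1 : Matrix (Fin n) (Fin n) ℂ) (0 : Matrix (Fin n) (Fin n') ℂ)‖ ≤ 1 := by
    have hct : (Matrix.fromCols (1 : Matrix (Fin n) (Fin n) ℂ)
        (0 : Matrix (Fin n) (Fin n') ℂ))ᴴ = Matrix.fromRows 1 0 := by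
      simp [Matrix.conjTranspose_fromCols_eq_fromRows_conjTranspose]
    have h := Matrix.l2_opNorm_conjTranspose_mul_self
      ((Matrix.fromCols (1 : Matrix (Fin n) (Fin n) ℂ) (0 : Matrix (Fin n) (Fin n') ℂ))ᴴ)
    rw [Matrix.conjTranspose_conjTranspose, hct, Matrix.fromCols_mul_fromRows] at h
    simp only [one_mul, Matrix.zero_mul, add_zero] at h
    rw [← Matrix.l2_opNorm_conjTranspose (Matrix.fromCols (1 : Matrix (Fin n) (Fin n) ℂ) 0),
      hct]
    nlinarith [norm_nonneg (Matrix.fromRows (1 : Matrix (Fin n) (Fin n) ℂ)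
      (0 : Matrix (Fin n') (Fin n) ℂ)), l2_norm_one_le (n := n)]
  have hYi : ‖Matrix.fromCols (0 : Matrix (Fin n') (Fin n) ℂ) (1 : Matrix (Fin n') (Fin n') ℂ)‖ ≤ 1 := by
    have hct : (Matrix.fromCols (0 : Matrix (Fin n') (Fin n) ℂ)
        (1 : Matrix (Fin n') (Fin n') ℂ))ᴴ = Matrix.fromRows 0 1 := by
      simp [Matrix.conjTranspose_fromCols_eq_fromRows_conjTranspose]
    have h := Matrix.l2_opNorm_conjTranspose_mul_self
      ((Matrix.fromCols (0 : Matrix (Fin n') (Fin n) ℂ) (1 : Matrix (Fin n') (Fin n') ℂ))ᴴ)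
    rw [Matrix.conjTranspose_conjTranspose, hct, Matrix.fromCols_mul_fromRows] at h
    simp only [one_mul, Matrix.zero_mul, zero_add] at h
    rw [← Matrix.l2_opNorm_conjTranspose (Matrix.fromCols (0 : Matrix (Fin n') (Fin n) ℂ) 1),
      hct]
    nlinarith [norm_nonneg (Matrix.fromRows (1 : Matrix (Fin n) (Fin n) ℂ)
      (0 : Matrix (Fin n') (Fin n) ℂ)), norm_nonneg (Matrix.fromRows
      (0 : Matrix (Fin n) (Fin n') ℂ) (1 : Matrix (Fin n') (Fin n') ℂ)), l2_norm_one_le (n := n')]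
  calc ‖Matrix.fromCols X Y‖
      ≤ ‖X * Matrix.fromCols (1 : Matrix (Fin n) (Fin n) ℂ) 0‖
        + ‖Y * Matrix.fromCols (0 : Matrix (Fin n') (Fin n) ℂ) 1‖ := by
        rw [hsplit]; exact norm_add_le _ _
    _ ≤ ‖X‖ * ‖Matrix.fromCols (1 : Matrix (Fin n) (Fin n) ℂ) (0 : Matrix (Fin n) (Fin n') ℂ)‖
        + ‖Y‖ * ‖Matrix.fromCols (0 : Matrix (Fin n') (Fin n) ℂ) (1 : Matrix (Fin n') (Fin n') ℂ)‖ :=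
        add_le_add (Matrix.l2_opNorm_mul _ _) (Matrix.l2_opNorm_mul _ _)
    _ ≤ ‖X‖ * 1 + ‖Y‖ * 1 :=
        add_le_add (mul_le_mul_of_nonneg_left hXi (norm_nonneg X))
          (mul_le_mul_of_nonneg_left hYi (norm_nonneg Y))
    _ = ‖X‖ + ‖Y‖ := by ring

open Matrix in
lemma l2_norm_fromRows_smul_one {n : ℕ} (a b : ℝ) :
    ‖Matrix.fromRows ((a : ℂ) • (1 : Matrix (Fin n) (Fin n) ℂ))
      ((b : ℂ) • (1 : Matrix (Fin n) (Fin n) ℂ))‖ ≤ Real.sqrt (a ^ 2 + b ^ 2) := by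
  set R := Matrix.fromRows ((a : ℂ) • (1 : Matrix (Fin n) (Fin n) ℂ))
      ((b : ℂ) • (1 : Matrix (Fin n) (Fin n) ℂ))
  have h := Matrix.l2_opNorm_conjTranspose_mul_self R
  have hRR : Rᴴ * R = ((a ^ 2 + b ^ 2 : ℝ) : ℂ) • (1 : Matrix (Fin n) (Fin n) ℂ) := by
    simp only [R, Matrix.conjTranspose_fromRows_eq_fromCols_conjTranspose,
      Matrix.conjTranspose_smul, Matrix.conjTranspose_one, Matrix.fromCols_mul_fromRows,
      Matrix.smul_mul, Matrix.mul_smul, Matrix.one_mul, smul_smul, ← add_smul]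
    congr 1
    push_cast
    ring_nf
    simp [Complex.conj_ofReal]
    ring
  rw [hRR] at h
  have hnorm : ‖((a ^ 2 + b ^ 2 : ℝ) : ℂ) • (1 : Matrix (Fin n) (Fin n) ℂ)‖
      ≤ a ^ 2 + b ^ 2 := by
    rw [norm_smul]
    have : ‖((a ^ 2 + b ^ 2 : ℝ) : ℂ)‖ = a ^ 2 + b ^ 2 := by
      rw [Complex.norm_real, Real.norm_eq_abs, abs_of_nonneg]; positivity
    rw [this]
    nlinarith [l2_norm_one_le (n := n), sq_nonneg a, sq_nonneg b]
  have hle : ‖R‖ * ‖R‖ ≤ a ^ 2 + b ^ 2 := h ▸ hnorm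
  have := Real.sqrt_le_sqrt (by nlinarith [norm_nonneg R] : ‖R‖ ^ 2 ≤ a ^ 2 + b ^ 2)
  rwa [Real.sqrt_sq (norm_nonneg R)] at this

/-- Direct (SSV-free) bound on the perturbed transfer matrix from `(z(0), ŵ_p)` to `ê`:
`‖[CuΦ⁻¹ , CuΦ⁻¹δS + δ_c S_c]‖ ≤ ‖CuΦ⁻¹‖ + ‖[CuΦ⁻¹S , S_c]‖ √(δ² + δ_c²)`. -/
theorem direct_bound_Tp_with_initial_error
    {n p : ℕ}
    (A S : Matrix (Fin n) (Fin n) ℂ) (Cu Sc : Matrix (Fin p) (Fin n) ℂ)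
    (δ δc : ℝ) (s : ℂ)
    (hΦ : IsUnit (s • (1 : Matrix (Fin n) (Fin n) ℂ) - A)) :
    ‖Matrix.fromCols
        (Cu * (s • (1 : Matrix (Fin n) (Fin n) ℂ) - A)⁻¹)
        (Cu * (s • (1 : Matrix (Fin n) (Fin n) ℂ) - A)⁻¹ * ((δ : ℂ) • S) + (δc : ℂ) • Sc)‖
      ≤ ‖Cu * (s • (1 : Matrix (Fin n) (Fin n) ℂ) - A)⁻¹‖
        + ‖Matrix.fromCols (Cu * (s • (1 : Matrix (Fin n) (Fin n) ℂ) - A)⁻¹ * S) Sc‖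
          * Real.sqrt (δ ^ 2 + δc ^ 2) := by
  set B := Cu * (s • (1 : Matrix (Fin n) (Fin n) ℂ) - A)⁻¹ with hB
  set N := B * ((δ : ℂ) • S) + (δc : ℂ) • Sc with hN
  have hfact : N = Matrix.fromCols (B * S) Sc
      * Matrix.fromRows ((δ : ℂ) • (1 : Matrix (Fin n) (Fin n) ℂ))
        ((δc : ℂ) • (1 : Matrix (Fin n) (Fin n) ℂ)) := by
    rw [Matrix.fromCols_mul_fromRows, hN]
    simp [Matrix.mul_smul, Matrix.smul_mul, mul_assoc]
  have h1 : ‖Matrix.fromCols B N‖ ≤ ‖B‖ + ‖N‖ := l2_norm_fromColumns_le B N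
  have h2 : ‖N‖ ≤ ‖Matrix.fromCols (B * S) Sc‖ * Real.sqrt (δ ^ 2 + δc ^ 2) := by
    rw [hfact]
    refine (Matrix.l2_opNorm_mul _ _).trans ?_
    exact mul_le_mul_of_nonneg_left (l2_norm_fromRows_smul_one δ δc) (norm_nonneg _)
  linarith
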